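/- (Maehara's Crossroads Theorem) Let σ, τ : [0,1] → [-1,1]² be continuous paths in the square with σ(0) on the left edge (σ(0)₁ = -1), σ(1) on the right edge (σ(1)₁ = 1), τ(0) on the bottom edge (τ(0)₂ = -1), and τ(1) on the top edge (τ(1)₂ = 1). Then there exist s, t ∈ [0,1] with σ(s) = τ(t). -/

import Mathlib

set_option maxHeartbeats 1000000
open Set Real intervalIntegral


lemma crx_sin_gt_half {x : ℝ} (h1 : π/6 < x) (h2 : x < 5*π/6) : 1/2 < Real.sin x := by
  have hpi := Real.pi_pos
  rcases le_or_gt x (π/2) with hx | hx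
  · have := Real.strictMonoOn_sin (a := π/6) (b := x)
      ⟨by linarith, by linarith⟩ ⟨by linarith, hx⟩ h1
    rwa [Real.sin_pi_div_six] at this
  · have h3 : π - x < π/2 := by linarith
    have := Real.strictMonoOn_sin (a := π/6) (b := π - x)
      ⟨by linarith, by linarith⟩ ⟨by linarith, by linarith⟩ (by linarith)
    rw [Real.sin_pi_div_six, Real.sin_pi_sub] at this
    exact this

lemma crx_sector {θ : ℝ} (h : -(1/2) ≤ Real.sin θ) :
    ∃ k : ℤ, θ ∈ Icc (2*π*k - π/6) (2*π*k + 7*π/6) := by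
  have hpi := Real.pi_pos
  set k : ℤ := ⌊(θ + π/6)/(2*π)⌋ with hk
  have h2π : (0:ℝ) < 2*π := by linarith
  have hfl := Int.floor_le ((θ + π/6)/(2*π))
  have hfl2 := Int.lt_floor_add_one ((θ + π/6)/(2*π))
  have hlow : 2*π*k ≤ θ + π/6 := by
    rw [mul_comm]
    calc (k:ℝ) * (2*π) ≤ ((θ + π/6)/(2*π)) * (2*π) := by
          exact mul_le_mul_of_nonneg_right hfl (le_of_lt h2π)
      _ = θ + π/6 := by field_simp
  have hhigh : θ + π/6 < 2*π*k + 2*π := by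
    have : (θ + π/6)/(2*π) * (2*π) < ((k:ℝ)+1) * (2*π) := by
      exact mul_lt_mul_of_pos_right hfl2 h2π
    rw [div_mul_cancel₀ _ (ne_of_gt h2π)] at this
    linarith [this]
  refine ⟨k, ⟨by linarith, ?_⟩⟩
  by_contra hcon
  push_neg at hcon
  set ψ := θ - 2*π*k with hψ
  have hsin : Real.sin ψ = Real.sin θ := by
    have : θ = ψ + k * (2*π) := by ring
    rw [this, Real.sin_add_int_mul_two_pi]
  have h1 : 7*π/6 < ψ := by simp only [hψ]; linarith
  have h2 : ψ < 11*π/6 := by linarith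
  have : 1/2 < Real.sin (ψ - π) := crx_sin_gt_half (by linarith) (by linarith)
  have hs2 : Real.sin (ψ - π) = - Real.sin ψ := by
    have : ψ = (ψ - π) + π := by ring
    rw [this, Real.sin_add_pi]; ring
  rw [hs2] at this
  rw [hsin] at this
  linarith


lemma crx_prop {φ : ℝ → ℝ} (hφ : ContinuousOn φ (Icc 0 1)) {lo hi : ℝ}
    (hlohi : hi - lo < 2*π)
    (hmem : ∀ x ∈ Icc (0:ℝ) 1, ∃ k : ℤ, φ x ∈ Icc (2*π*k + lo) (2*π*k + hi))
    {x₀ : ℝ} (hx₀ : x₀ ∈ Icc (0:ℝ) 1) {k₀ : ℤ}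
    (h0 : φ x₀ ∈ Icc (2*π*k₀ + lo) (2*π*k₀ + hi)) :
    ∀ x ∈ Icc (0:ℝ) 1, φ x ∈ Icc (2*π*k₀ + lo) (2*π*k₀ + hi) := by
  have hpi := Real.pi_pos
  intro x hx
  obtain ⟨k, hk⟩ := hmem x hx
  have key : k = k₀ := by
    by_contra hne
    have husub : uIcc x₀ x ⊆ Icc (0:ℝ) 1 := Set.uIcc_subset_Icc hx₀ hx
    -- helper to cast int inequalities
    rcases lt_or_gt_of_ne hne with hlt | hgt
    · -- k < k₀ : φ x is below; pick c between top of k-interval region and bottom of k₀ interval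
      have hkk : (k:ℝ) + 1 ≤ k₀ := by exact_mod_cast hlt
      set c := 2*π*k₀ + (lo - 2*π + hi)/2 with hc
      have hcx : φ x < c := by
        have : φ x ≤ 2*π*k + hi := hk.2
        have h2 : 2*π*(k:ℝ) ≤ 2*π*k₀ - 2*π := by nlinarith
        calc φ x ≤ 2*π*k + hi := hk.2
          _ ≤ 2*π*k₀ - 2*π + hi := by linarith
          _ < c := by rw [hc]; linarith
      have hcx0 : c < φ x₀ := by
        have := h0.1
        rw [hc]; linarith
      have hcmem : c ∈ uIcc (φ x₀) (φ x) := by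
        rw [mem_uIcc]; right; exact ⟨le_of_lt hcx, le_of_lt hcx0⟩
      obtain ⟨y, hy, hyc⟩ := intermediate_value_uIcc (hφ.mono husub) hcmem
      obtain ⟨m, hm⟩ := hmem y (husub hy)
      rw [hyc] at hm
      rcases le_or_gt m (k₀ - 1) with hm1 | hm1
      · have : (m:ℝ) ≤ k₀ - 1 := by exact_mod_cast hm1
        have := hm.2
        have h3 : 2*π*(m:ℝ) ≤ 2*π*k₀ - 2*π := by nlinarith
        rw [hc] at this; linarith
      · have hm2 : k₀ ≤ m := by omega
        have : (k₀:ℝ) ≤ m := by exact_mod_cast hm2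
        have := hm.1
        have h3 : 2*π*(k₀:ℝ) ≤ 2*π*m := by nlinarith
        rw [hc] at this; linarith
    · -- k > k₀
      have hkk : (k₀:ℝ) + 1 ≤ k := by exact_mod_cast hgt
      set c := 2*π*k₀ + (hi + 2*π + lo)/2 with hc
      have hcx : c < φ x := by
        have h2 : 2*π*(k₀:ℝ) + 2*π ≤ 2*π*k := by nlinarith
        have := hk.1
        rw [hc]; linarith
      have hcx0 : φ x₀ < c := by
        have := h0.2
        rw [hc]; linarith
      have hcmem : c ∈ uIcc (φ x₀) (φ x) := by
        rw [mem_uIcc]; left; exact ⟨le_of_lt hcx0, le_of_lt hcx⟩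
      obtain ⟨y, hy, hyc⟩ := intermediate_value_uIcc (hφ.mono husub) hcmem
      obtain ⟨m, hm⟩ := hmem y (husub hy)
      rw [hyc] at hm
      rcases le_or_gt m k₀ with hm1 | hm1
      · have : (m:ℝ) ≤ k₀ := by exact_mod_cast hm1
        have := hm.2
        have h3 : 2*π*(m:ℝ) ≤ 2*π*k₀ := by nlinarith
        rw [hc] at this; linarith
      · have : (k₀:ℝ) + 1 ≤ m := by exact_mod_cast hm1
        have := hm.1
        have h3 : 2*π*(k₀:ℝ) + 2*π ≤ 2*π*m := by nlinarith
        rw [hc] at this; linarith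
  rw [key] at hk
  exact hk

lemma crx_branch {x lo hi lo' hi' : ℝ} {k m : ℤ} (j : ℤ)
    (h1 : x ∈ Icc (2*π*k + lo) (2*π*k + hi))
    (h2 : x ∈ Icc (2*π*m + lo') (2*π*m + hi'))
    (hA : 2*π*((j:ℝ)-1) < lo - hi') (hB : hi - lo' < 2*π*((j:ℝ)+1)) : m = k + j := by
  have hpi := Real.pi_pos
  have hlow : 2*π*((j:ℝ)-1) < 2*π*((m:ℝ)-(k:ℝ)) := by
    have := h1.1; have := h2.2; nlinarith
  have hhigh : 2*π*((m:ℝ)-(k:ℝ)) < 2*π*((j:ℝ)+1) := by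
    have := h1.2; have := h2.1; nlinarith
  have l1 : (j:ℝ) - 1 < (m:ℝ) - k := by nlinarith
  have l2 : (m:ℝ) - k < (j:ℝ) + 1 := by nlinarith
  have i1 : (j:ℤ) - 1 < m - k := by exact_mod_cast l1
  have i2 : (m:ℤ) - k < j + 1 := by exact_mod_cast l2
  omega


lemma crx_weier {f : ℝ → ℝ} (hf : ContinuousOn f (Icc 0 1)) {ε : ℝ} (hε : 0 < ε) :
    ∃ p : Polynomial ℝ, ∀ x ∈ Icc (0:ℝ) 1, |p.eval x - f x| ≤ ε := by
  set F : C(Icc (0:ℝ) 1, ℝ) := ⟨fun x => f x, continuousOn_iff_continuous_restrict.mp hf⟩ with hF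
  obtain ⟨p, hp⟩ := exists_polynomial_near_continuousMap 0 1 F ε hε
  refine ⟨p, fun x hx => ?_⟩
  have := ContinuousMap.norm_coe_le_norm (p.toContinuousMapOn _ - F) ⟨x, hx⟩
  have h2 := le_of_lt (lt_of_le_of_lt this hp)
  exact h2


lemma crx_clog {P Q dP dQ : ℝ → ℂ}
    (hPd : ∀ x, HasDerivAt P (dP x) x) (hQd : ∀ x, HasDerivAt Q (dQ x) x)
    (hdPc : Continuous dP) (hdQc : Continuous dQ)
    (hne : ∀ x ∈ Icc (0:ℝ) 1, ∀ y ∈ Icc (0:ℝ) 1, P x - Q y ≠ 0) :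
    ∃ θ : ℝ × ℝ → ℝ, Continuous θ ∧ ∀ s ∈ Icc (0:ℝ) 1, ∀ t ∈ Icc (0:ℝ) 1,
      P s - Q t = (‖P s - Q t‖ : ℂ) * Complex.exp (θ (s, t) * Complex.I) := by
  have hPc : Continuous P := by
    rw [continuous_iff_continuousAt]; exact fun x => (hPd x).continuousAt
  have hQc : Continuous Q := by
    rw [continuous_iff_continuousAt]; exact fun x => (hQd x).continuousAt
  set c : ℝ → ℝ := fun x => max 0 (min 1 x) with hcdef
  have hc : Continuous c := continuous_const.max (continuous_const.min continuous_id)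
  have hmem : ∀ x, c x ∈ Icc (0:ℝ) 1 :=
    fun x => ⟨le_max_left _ _, max_le zero_le_one (min_le_left _ _)⟩
  have hceq : ∀ x ∈ Icc (0:ℝ) 1, c x = x := by
    intro x hx
    simp only [hcdef]
    rw [min_eq_right hx.2, max_eq_right hx.1]
  have h01 : (0:ℝ) ∈ Icc (0:ℝ) 1 := by norm_num
  have h11 : (1:ℝ) ∈ Icc (0:ℝ) 1 := by norm_num
  have hden : ∀ t u : ℝ, P (c u) - Q (c t) ≠ 0 := fun t u => hne _ (hmem u) _ (hmem t)
  have hden0 : ∀ v : ℝ, P 0 - Q (c v) ≠ 0 := fun v => hne 0 h01 _ (hmem v)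
  set Fa : ℝ → ℝ → ℂ := fun t u => dP (c u) / (P (c u) - Q (c t)) with hFadef
  set Fb : ℝ → ℂ := fun v => dQ (c v) / (P 0 - Q (c v)) with hFbdef
  have hFac : ∀ t, Continuous (Fa t) := fun t =>
    (hdPc.comp hc).div ((hPc.comp hc).sub continuous_const) (fun u => hden t u)
  have hFbc : Continuous Fb :=
    (hdQc.comp hc).div (continuous_const.sub (hQc.comp hc)) hden0
  set A : ℝ → ℝ → ℂ := fun s t => ∫ u in (0:ℝ)..s, Fa t u with hAdef
  set B : ℝ → ℂ := fun t => ∫ v in (0:ℝ)..t, Fb v with hBdef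
  have hAj : Continuous fun p : ℝ × ℝ => A p.1 p.2 := by
    have huc : Continuous (Function.uncurry fun (p : ℝ × ℝ) (u : ℝ) => Fa p.2 u) := by
      apply Continuous.div
      · exact hdPc.comp (hc.comp continuous_snd)
      · exact ((hPc.comp (hc.comp continuous_snd)).sub
          (hQc.comp (hc.comp (continuous_snd.comp continuous_fst))))
      · exact fun p => hden p.1.2 p.2
    exact continuous_parametric_intervalIntegral_of_continuous (μ := MeasureTheory.volume)
      huc continuous_fst
  have hBc : Continuous B :=
    intervalIntegral.continuous_primitive (fun a b => hFbc.intervalIntegrable a b) 0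
  have hBd : ∀ t, HasDerivAt B (Fb t) t := fun t => (hFbc.integral_hasStrictDerivAt 0 t).hasDerivAt
  have hAd : ∀ t s, HasDerivAt (fun s => A s t) (Fa t s) s := fun t s =>
    ((hFac t).integral_hasStrictDerivAt 0 s).hasDerivAt
  -- step 1
  have step1 : ∀ t ∈ Icc (0:ℝ) 1, (P 0 - Q t) * Complex.exp (B t) = P 0 - Q 0 := by
    have hcont : ContinuousOn (fun t => (P 0 - Q t) * Complex.exp (B t)) (Icc 0 1) :=
      ((continuous_const.sub hQc).mul hBc.cexp).continuousOn
    have hder : ∀ x ∈ Ico (0:ℝ) 1,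
        HasDerivWithinAt (fun t => (P 0 - Q t) * Complex.exp (B t)) 0 (Ici x) x := by
      intro x hx
      have hxI : x ∈ Icc (0:ℝ) 1 := ⟨hx.1, le_of_lt hx.2⟩
      have h1 : HasDerivAt (fun t => P 0 - Q t) (0 - dQ x) x :=
        (hasDerivAt_const x (P 0)).sub (hQd x)
      have h2 : HasDerivAt (fun t => Complex.exp (B t)) (Complex.exp (B x) * Fb x) x :=
        (hBd x).cexp
      have hmul := h1.mul h2
      have hzero : (0 - dQ x) * Complex.exp (B x)
          + (P 0 - Q x) * (Complex.exp (B x) * Fb x) = 0 := by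
        have h0 : P 0 - Q x ≠ 0 := hne 0 h01 x hxI
        simp only [hFbdef, hceq x hxI]
        field_simp
        ring
      rw [hzero] at hmul
      exact hmul.hasDerivWithinAt
    intro t ht
    have := constant_of_has_deriv_right_zero hcont hder t ht
    simpa [hBdef, intervalIntegral.integral_same] using this
  -- step 2
  have step2 : ∀ t ∈ Icc (0:ℝ) 1, ∀ s ∈ Icc (0:ℝ) 1,
      (P s - Q t) * Complex.exp (- A s t) = P 0 - Q t := by
    intro t ht
    have hcont : ContinuousOn (fun s => (P s - Q t) * Complex.exp (- A s t)) (Icc 0 1) := by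
      apply Continuous.continuousOn
      apply (hPc.sub continuous_const).mul
      apply Continuous.cexp
      apply Continuous.neg
      exact intervalIntegral.continuous_primitive
        (fun a b => (hFac t).intervalIntegrable a b) 0
    have hder : ∀ x ∈ Ico (0:ℝ) 1,
        HasDerivWithinAt (fun s => (P s - Q t) * Complex.exp (- A s t)) 0 (Ici x) x := by
      intro x hx
      have hxI : x ∈ Icc (0:ℝ) 1 := ⟨hx.1, le_of_lt hx.2⟩
      have h1 : HasDerivAt (fun s => P s - Q t) (dP x - 0) x :=
        (hPd x).sub (hasDerivAt_const x (Q t))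
      have h2 : HasDerivAt (fun s => Complex.exp (- A s t))
          (Complex.exp (- A x t) * (- Fa t x)) x := ((hAd t x).neg).cexp
      have hmul := h1.mul h2
      have hzero : (dP x - 0) * Complex.exp (- A x t)
          + (P x - Q t) * (Complex.exp (- A x t) * (- Fa t x)) = 0 := by
        simp only [hFadef, hceq x hxI, hceq t ht]
        have hPQ : P x - Q t ≠ 0 := hne x hxI t ht
        field_simp
        ring
      rw [hzero] at hmul
      exact hmul.hasDerivWithinAt
    intro s hs
    have := constant_of_has_deriv_right_zero hcont hder s hs
    simpa [hAdef, intervalIntegral.integral_same] using this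
  -- combine into exponential form
  set c₀ : ℂ := P 0 - Q 0 with hc₀
  have key : ∀ s ∈ Icc (0:ℝ) 1, ∀ t ∈ Icc (0:ℝ) 1,
      P s - Q t = c₀ * Complex.exp (A s t - B t) := by
    intro s hs t ht
    have h2 := step2 t ht s hs
    have h1 := step1 t ht
    have hPQ : P s - Q t = (P 0 - Q t) * Complex.exp (A s t) := by
      have := congrArg (fun z => z * Complex.exp (A s t)) h2
      simpa [mul_assoc, ← Complex.exp_add] using this
    have hP0 : P 0 - Q t = c₀ * Complex.exp (- B t) := by
      have := congrArg (fun z => z * Complex.exp (- B t)) h1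
      simpa [mul_assoc, ← Complex.exp_add] using this
    rw [hPQ, hP0]
    rw [mul_assoc, ← Complex.exp_add]
    ring_nf
  -- define θ
  refine ⟨fun p => c₀.arg + (A p.1 p.2 - B p.2).im, ?_, ?_⟩
  · exact continuous_const.add (Complex.continuous_im.comp
      (hAj.sub (hBc.comp continuous_snd)))
  · intro s hs t ht
    have hzkey := key s hs t ht
    set E : ℂ := A s t - B t with hE
    have habs : (‖P s - Q t‖ : ℝ) = ‖c₀‖ * Real.exp E.re := by
      rw [hzkey, norm_mul, Complex.norm_exp]
    have hEsplit : Complex.exp E = (Real.exp E.re : ℂ) * Complex.exp (E.im * Complex.I) := by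
      rw [Complex.ofReal_exp, ← Complex.exp_add]
      congr 1
      exact (Complex.re_add_im E).symm
    show P s - Q t = ↑(‖P s - Q t‖) * Complex.exp (↑(c₀.arg + E.im) * Complex.I)
    rw [habs, hzkey, hEsplit]
    conv_lhs => rw [← Complex.norm_mul_exp_arg_mul_I c₀]
    push_cast
    rw [show ((c₀.arg : ℂ) + ↑E.im) * Complex.I = ↑c₀.arg * Complex.I + ↑E.im * Complex.I by ring,
      Complex.exp_add]
    ring

lemma crx_ratio {e r v s : ℝ} (he : 0 < e) (hr : 12*e ≤ r) (hv : -(4*e) ≤ v)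
    (hvs : v = r * s) : -(1/2) ≤ s := by
  by_contra h
  push_neg at h
  have hrpos : 0 < r := by linarith
  nlinarith

theorem stmt_16 (σ τ : ℝ → ℝ × ℝ)
    (hσc : ContinuousOn σ (Set.Icc 0 1)) (hτc : ContinuousOn τ (Set.Icc 0 1))
    (hσsq : ∀ t ∈ Set.Icc (0 : ℝ) 1, σ t ∈ Set.Icc (-1 : ℝ) 1 ×ˢ Set.Icc (-1 : ℝ) 1)
    (hτsq : ∀ t ∈ Set.Icc (0 : ℝ) 1, τ t ∈ Set.Icc (-1 : ℝ) 1 ×ˢ Set.Icc (-1 : ℝ) 1)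
    (hσ0 : (σ 0).1 = -1) (hσ1 : (σ 1).1 = 1)
    (hτ0 : (τ 0).2 = -1) (hτ1 : (τ 1).2 = 1) :
    ∃ s ∈ Set.Icc (0 : ℝ) 1, ∃ t ∈ Set.Icc (0 : ℝ) 1, σ s = τ t := by
  have hpi := Real.pi_pos
  have h01 : (0:ℝ) ∈ Icc (0:ℝ) 1 := by norm_num
  have h11 : (1:ℝ) ∈ Icc (0:ℝ) 1 := by norm_num
  by_contra hcon
  push_neg at hcon
  -- complex-valued paths
  set f1 : ℝ → ℂ := fun x => ((σ x).1 : ℂ) + ((σ x).2 : ℂ) * Complex.I with hf1def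
  set f2 : ℝ → ℂ := fun y => ((τ y).1 : ℂ) + ((τ y).2 : ℂ) * Complex.I with hf2def
  have hσ1c : ContinuousOn (fun x => (σ x).1) (Icc 0 1) := hσc.fst
  have hσ2c : ContinuousOn (fun x => (σ x).2) (Icc 0 1) := hσc.snd
  have hτ1c : ContinuousOn (fun x => (τ x).1) (Icc 0 1) := hτc.fst
  have hτ2c : ContinuousOn (fun x => (τ x).2) (Icc 0 1) := hτc.snd
  have hf1c : ContinuousOn f1 (Icc 0 1) :=
    (Complex.continuous_ofReal.comp_continuousOn hσ1c).add
      ((Complex.continuous_ofReal.comp_continuousOn hσ2c).mul continuousOn_const)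
  have hf2c : ContinuousOn f2 (Icc 0 1) :=
    (Complex.continuous_ofReal.comp_continuousOn hτ1c).add
      ((Complex.continuous_ofReal.comp_continuousOn hτ2c).mul continuousOn_const)
  -- minimum distance
  set K : Set (ℝ × ℝ) := Icc (0:ℝ) 1 ×ˢ Icc (0:ℝ) 1 with hKdef
  have hKc : IsCompact K := isCompact_Icc.prod isCompact_Icc
  have hKne : K.Nonempty := ⟨(0, 0), ⟨h01, h01⟩⟩
  have hFK : ContinuousOn (fun p : ℝ × ℝ => f1 p.1 - f2 p.2) K := by
    apply ContinuousOn.sub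
    · exact hf1c.comp continuousOn_fst (fun p hp => hp.1)
    · exact hf2c.comp continuousOn_snd (fun p hp => hp.2)
  have hGc : ContinuousOn (fun p : ℝ × ℝ => ‖f1 p.1 - f2 p.2‖) K :=
    continuous_norm.comp_continuousOn hFK
  obtain ⟨p₀, hp₀K, hminOn⟩ := hKc.exists_isMinOn hKne hGc
  set δ : ℝ := ‖f1 p₀.1 - f2 p₀.2‖ with hδdef
  have hmin : ∀ x ∈ Icc (0:ℝ) 1, ∀ y ∈ Icc (0:ℝ) 1, δ ≤ ‖f1 x - f2 y‖ := by
    intro x hx y hy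
    exact isMinOn_iff.mp hminOn (x, y) (Set.mk_mem_prod hx hy)
  have hδ : 0 < δ := by
    rw [hδdef]
    rw [norm_pos_iff]
    intro hz
    apply hcon p₀.1 hp₀K.1 p₀.2 hp₀K.2
    have hre := congrArg Complex.re hz
    have him := congrArg Complex.im hz
    rw [sub_eq_zero] at hz
    have h1 : (σ p₀.1).1 = (τ p₀.2).1 := by
      have := congrArg Complex.re hz
      simpa [hf1def, hf2def] using this
    have h2 : (σ p₀.1).2 = (τ p₀.2).2 := by
      have := congrArg Complex.im hz
      simpa [hf1def, hf2def] using this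
    exact Prod.ext h1 h2
  -- polynomial approximations
  set ε : ℝ := δ/16 with hεdef
  have hε : 0 < ε := by rw [hεdef]; linarith
  obtain ⟨p1, hp1⟩ := crx_weier hσ1c hε
  obtain ⟨p2, hp2⟩ := crx_weier hσ2c hε
  obtain ⟨q1, hq1⟩ := crx_weier hτ1c hε
  obtain ⟨q2, hq2⟩ := crx_weier hτ2c hε
  set P : ℝ → ℂ := fun x => ((p1.eval x : ℝ) : ℂ) + ((p2.eval x : ℝ) : ℂ) * Complex.I with hPdef
  set Q : ℝ → ℂ := fun y => ((q1.eval y : ℝ) : ℂ) + ((q2.eval y : ℝ) : ℂ) * Complex.I with hQdef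
  set dP : ℝ → ℂ := fun x => ((p1.derivative.eval x : ℝ) : ℂ)
    + ((p2.derivative.eval x : ℝ) : ℂ) * Complex.I with hdPdef
  set dQ : ℝ → ℂ := fun y => ((q1.derivative.eval y : ℝ) : ℂ)
    + ((q2.derivative.eval y : ℝ) : ℂ) * Complex.I with hdQdef
  have hPd : ∀ x, HasDerivAt P (dP x) x := fun x =>
    ((p1.hasDerivAt x).ofReal_comp).add (((p2.hasDerivAt x).ofReal_comp).mul_const Complex.I)
  have hQd : ∀ y, HasDerivAt Q (dQ y) y := fun y =>
    ((q1.hasDerivAt y).ofReal_comp).add (((q2.hasDerivAt y).ofReal_comp).mul_const Complex.I)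
  have hdPc : Continuous dP :=
    (Complex.continuous_ofReal.comp p1.derivative.continuous).add
      ((Complex.continuous_ofReal.comp p2.derivative.continuous).mul continuous_const)
  have hdQc : Continuous dQ :=
    (Complex.continuous_ofReal.comp q1.derivative.continuous).add
      ((Complex.continuous_ofReal.comp q2.derivative.continuous).mul continuous_const)
  -- approximation bounds
  have habs2 : ∀ a b : ℝ, ‖(a:ℂ) + (b:ℂ)*Complex.I‖ ≤ |a| + |b| := by
    intro a b
    calc ‖(a:ℂ) + (b:ℂ)*Complex.I‖
        ≤ ‖(a:ℂ)‖ + ‖(b:ℂ)*Complex.I‖ := norm_add_le _ _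
      _ = |a| + |b| := by rw [norm_mul]; simp
  have hPf1 : ∀ x ∈ Icc (0:ℝ) 1, ‖P x - f1 x‖ ≤ 2*ε := by
    intro x hx
    have heq : P x - f1 x = ((p1.eval x - (σ x).1 : ℝ) : ℂ)
        + ((p2.eval x - (σ x).2 : ℝ) : ℂ) * Complex.I := by
      simp only [hPdef, hf1def]
      push_cast
      ring
    rw [heq]
    calc ‖_‖ ≤ |p1.eval x - (σ x).1| + |p2.eval x - (σ x).2| := habs2 _ _
      _ ≤ ε + ε := add_le_add (hp1 x hx) (hp2 x hx)
      _ = 2*ε := by ring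
  have hQf2 : ∀ y ∈ Icc (0:ℝ) 1, ‖Q y - f2 y‖ ≤ 2*ε := by
    intro y hy
    have heq : Q y - f2 y = ((q1.eval y - (τ y).1 : ℝ) : ℂ)
        + ((q2.eval y - (τ y).2 : ℝ) : ℂ) * Complex.I := by
      simp only [hQdef, hf2def]
      push_cast
      ring
    rw [heq]
    calc ‖_‖ ≤ |q1.eval y - (τ y).1| + |q2.eval y - (τ y).2| := habs2 _ _
      _ ≤ ε + ε := add_le_add (hq1 y hy) (hq2 y hy)
      _ = 2*ε := by ring
  have hclose : ∀ x ∈ Icc (0:ℝ) 1, ∀ y ∈ Icc (0:ℝ) 1,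
      ‖(P x - Q y) - (f1 x - f2 y)‖ ≤ 4*ε := by
    intro x hx y hy
    have heq : (P x - Q y) - (f1 x - f2 y) = (P x - f1 x) - (Q y - f2 y) := by ring
    rw [heq]
    calc ‖(P x - f1 x) - (Q y - f2 y)‖
        ≤ ‖P x - f1 x‖ + ‖Q y - f2 y‖ := by
          rw [sub_eq_add_neg]
          refine le_trans (norm_add_le _ _) ?_
          rw [norm_neg]
      _ ≤ 2*ε + 2*ε := add_le_add (hPf1 x hx) (hQf2 y hy)
      _ = 4*ε := by ring
  have hbig : ∀ x ∈ Icc (0:ℝ) 1, ∀ y ∈ Icc (0:ℝ) 1, 12*ε ≤ ‖P x - Q y‖ := by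
    intro x hx y hy
    have h1 := hmin x hx y hy
    have h2 := hclose x hx y hy
    have h2' : ‖(f1 x - f2 y) - (P x - Q y)‖ ≤ 4*ε := by
      rwa [norm_sub_rev]
    have htri : ‖f1 x - f2 y‖
        ≤ ‖P x - Q y‖ + ‖(f1 x - f2 y) - (P x - Q y)‖ := by
      calc ‖f1 x - f2 y‖
          = ‖(P x - Q y) + ((f1 x - f2 y) - (P x - Q y))‖ := by congr 1; ring
        _ ≤ _ := norm_add_le _ _
    have hδε : δ = 16*ε := by rw [hεdef]; ring
    linarith
  have hne : ∀ x ∈ Icc (0:ℝ) 1, ∀ y ∈ Icc (0:ℝ) 1, P x - Q y ≠ 0 := by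
    intro x hx y hy h0
    have := hbig x hx y hy
    rw [h0] at this
    simp at this
    linarith
  obtain ⟨θ, hθc, hθeq⟩ := crx_clog hPd hQd hdPc hdQc hne
  -- re and im of P x - Q y in polar form
  have hre : ∀ x ∈ Icc (0:ℝ) 1, ∀ y ∈ Icc (0:ℝ) 1,
      (P x - Q y).re = ‖P x - Q y‖ * Real.cos (θ (x, y)) := by
    intro x hx y hy
    conv_lhs => rw [hθeq x hx y hy]
    simp [Complex.mul_re, Complex.exp_ofReal_mul_I_re, Complex.exp_ofReal_mul_I_im]
  have him : ∀ x ∈ Icc (0:ℝ) 1, ∀ y ∈ Icc (0:ℝ) 1,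
      (P x - Q y).im = ‖P x - Q y‖ * Real.sin (θ (x, y)) := by
    intro x hx y hy
    conv_lhs => rw [hθeq x hx y hy]
    simp [Complex.mul_im, Complex.exp_ofReal_mul_I_re, Complex.exp_ofReal_mul_I_im]
  -- difference bounds on re/im
  have himdiff : ∀ x ∈ Icc (0:ℝ) 1, ∀ y ∈ Icc (0:ℝ) 1,
      |(P x - Q y).im - (f1 x - f2 y).im| ≤ 4*ε := by
    intro x hx y hy
    have h2 := hclose x hx y hy
    have := Complex.abs_im_le_norm ((P x - Q y) - (f1 x - f2 y))
    rw [Complex.sub_im] at this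
    linarith
  have hrediff : ∀ x ∈ Icc (0:ℝ) 1, ∀ y ∈ Icc (0:ℝ) 1,
      |(P x - Q y).re - (f1 x - f2 y).re| ≤ 4*ε := by
    intro x hx y hy
    have h2 := hclose x hx y hy
    have := Complex.abs_re_le_norm ((P x - Q y) - (f1 x - f2 y))
    rw [Complex.sub_re] at this
    linarith
  -- the four edge sector conditions
  have hbot : ∀ s ∈ Icc (0:ℝ) 1, ∃ k : ℤ,
      θ (s, 0) ∈ Icc (2*π*k + -(π/6)) (2*π*k + 7*π/6) := by
    intro s hs
    have hgim : 0 ≤ (f1 s - f2 0).im := by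
      simp only [hf1def, hf2def, Complex.sub_im, Complex.add_im, Complex.ofReal_im,
        Complex.mul_im, Complex.ofReal_re, Complex.I_im, Complex.I_re]
      rw [hτ0]
      have := (hσsq s hs).2.1
      linarith
    have habs' := abs_le.mp (himdiff s hs 0 h01)
    have hzim : -(4*ε) ≤ (P s - Q 0).im := by linarith [habs'.1]
    have hsin := crx_ratio hε (hbig s hs 0 h01) hzim (him s hs 0 h01)
    obtain ⟨k, hk⟩ := crx_sector hsin
    exact ⟨k, ⟨by linarith [hk.1], by linarith [hk.2]⟩⟩
  have hright : ∀ t ∈ Icc (0:ℝ) 1, ∃ k : ℤ,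
      θ (1, t) ∈ Icc (2*π*k + -(2*π/3)) (2*π*k + 2*π/3) := by
    intro t ht
    have hgre : 0 ≤ (f1 1 - f2 t).re := by
      simp only [hf1def, hf2def, Complex.sub_re, Complex.add_re, Complex.ofReal_re,
        Complex.mul_re, Complex.ofReal_im, Complex.I_re, Complex.I_im]
      rw [hσ1]
      have := (hτsq t ht).1.2
      linarith
    have habs' := abs_le.mp (hrediff 1 h11 t ht)
    have hzre : -(4*ε) ≤ (P 1 - Q t).re := by linarith [habs'.1]
    have hcos := crx_ratio hε (hbig 1 h11 t ht) hzre (hre 1 h11 t ht)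
    have hsin : -(1/2 : ℝ) ≤ Real.sin (θ (1, t) + π/2) := by
      rw [Real.sin_add_pi_div_two]; exact hcos
    obtain ⟨k, hk⟩ := crx_sector hsin
    exact ⟨k, ⟨by linarith [hk.1], by linarith [hk.2]⟩⟩
  have htop : ∀ s ∈ Icc (0:ℝ) 1, ∃ k : ℤ,
      θ (s, 1) ∈ Icc (2*π*k + -(7*π/6)) (2*π*k + π/6) := by
    intro s hs
    have hgim : (f1 s - f2 1).im ≤ 0 := by
      simp only [hf1def, hf2def, Complex.sub_im, Complex.add_im, Complex.ofReal_im,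
        Complex.mul_im, Complex.ofReal_re, Complex.I_im, Complex.I_re]
      rw [hτ1]
      have := (hσsq s hs).2.2
      linarith
    have habs' := abs_le.mp (himdiff s hs 1 h11)
    have hzim : -(4*ε) ≤ -(P s - Q 1).im := by linarith [habs'.2]
    have hvs : -(P s - Q 1).im
        = ‖P s - Q 1‖ * (- Real.sin (θ (s, 1))) := by
      rw [him s hs 1 h11]; ring
    have hsin' := crx_ratio hε (hbig s hs 1 h11) hzim hvs
    have hsin : -(1/2 : ℝ) ≤ Real.sin (θ (s, 1) + π) := by
      rw [Real.sin_add_pi]; linarith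
    obtain ⟨k, hk⟩ := crx_sector hsin
    exact ⟨k, ⟨by linarith [hk.1], by linarith [hk.2]⟩⟩
  have hleft : ∀ t ∈ Icc (0:ℝ) 1, ∃ k : ℤ,
      θ (0, t) ∈ Icc (2*π*k + π/3) (2*π*k + 5*π/3) := by
    intro t ht
    have hgre : (f1 0 - f2 t).re ≤ 0 := by
      simp only [hf1def, hf2def, Complex.sub_re, Complex.add_re, Complex.ofReal_re,
        Complex.mul_re, Complex.ofReal_im, Complex.I_re, Complex.I_im]
      rw [hσ0]
      have := (hτsq t ht).1.1
      linarith
    have habs' := abs_le.mp (hrediff 0 h01 t ht)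
    have hzre : -(4*ε) ≤ -(P 0 - Q t).re := by linarith [habs'.2]
    have hvs : -(P 0 - Q t).re
        = ‖P 0 - Q t‖ * (- Real.cos (θ (0, t))) := by
      rw [hre 0 h01 t ht]; ring
    have hcos' := crx_ratio hε (hbig 0 h01 t ht) hzre hvs
    have hsin : -(1/2 : ℝ) ≤ Real.sin (θ (0, t) - π/2) := by
      rw [Real.sin_sub_pi_div_two]; linarith
    obtain ⟨k, hk⟩ := crx_sector hsin
    exact ⟨k, ⟨by linarith [hk.1], by linarith [hk.2]⟩⟩
  -- edge continuity
  have hθb : ContinuousOn (fun s => θ (s, 0)) (Icc 0 1) :=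
    (hθc.comp (continuous_id.prodMk continuous_const)).continuousOn
  have hθr : ContinuousOn (fun t => θ (1, t)) (Icc 0 1) :=
    (hθc.comp (continuous_const.prodMk continuous_id)).continuousOn
  have hθt : ContinuousOn (fun s => θ (s, 1)) (Icc 0 1) :=
    (hθc.comp (continuous_id.prodMk continuous_const)).continuousOn
  have hθl : ContinuousOn (fun t => θ (0, t)) (Icc 0 1) :=
    (hθc.comp (continuous_const.prodMk continuous_id)).continuousOn
  -- the chain around the boundary
  obtain ⟨k₀, hk₀⟩ := hbot 0 h01
  have hb := crx_prop hθb (by linarith) hbot h01 hk₀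
  have hθ10 := hb 1 h11
  obtain ⟨k₁, hk₁⟩ := hright 0 h01
  have hk₁0 : k₁ = k₀ := by
    have := crx_branch 0 hθ10 hk₁ (by push_cast; linarith) (by push_cast; linarith)
    omega
  rw [hk₁0] at hk₁
  have hr := crx_prop hθr (by linarith) hright h01 hk₁
  have hθ11 := hr 1 h11
  obtain ⟨k₂, hk₂⟩ := htop 1 h11
  have hk₂0 : k₂ = k₀ := by
    have := crx_branch 0 hθ11 hk₂ (by push_cast; linarith) (by push_cast; linarith)
    omega
  rw [hk₂0] at hk₂
  have ht := crx_prop hθt (by linarith) htop h11 hk₂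
  have hθ01 := ht 0 h01
  obtain ⟨k₃, hk₃⟩ := hleft 1 h11
  have hk₃0 : k₃ = k₀ - 1 := by
    have := crx_branch (-1) hθ01 hk₃ (by push_cast; linarith) (by push_cast; linarith)
    omega
  rw [hk₃0] at hk₃
  have hl := crx_prop hθl (by linarith) hleft h11 hk₃
  have hθ00 := hl 0 h01
  have hup := hθ00.2
  have hlow := hk₀.1
  push_cast at hup hlow
  linarith
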